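/- The function f : ℝ² → ℝ defined by f(x,y) = x³/(x²+y²) for (x,y) ≠ (0,0) and f(0,0) = 0 is arc-analytic: for every real-analytic curve γ : ℝ → ℝ², the composition f ∘ γ is real-analytic. -/

import Mathlib

/-- The function f(x,y) = x³/(x²+y²), f(0,0) = 0. -/
noncomputable def cartanFun (p : ℝ × ℝ) : ℝ :=
  if p = (0, 0) then 0 else p.1 ^ 3 / (p.1 ^ 2 + p.2 ^ 2)

open Filter Topology

lemma cartanFun_aux_sq (x y : ℝ) : x ^ 2 + y ^ 2 = 0 ↔ x = 0 ∧ y = 0 := by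
  constructor
  · intro h
    constructor <;> nlinarith [sq_nonneg x, sq_nonneg y]
  · rintro ⟨rfl, rfl⟩; ring

lemma cartanFun_eq_of_ne (p : ℝ × ℝ) (hp : p ≠ (0, 0)) :
    cartanFun p = p.1 ^ 3 / (p.1 ^ 2 + p.2 ^ 2) := if_neg hp

lemma cartanFun_zero : cartanFun (0, 0) = 0 := if_pos rfl

lemma cartanFun_zero' : cartanFun 0 = 0 := if_pos rfl

/-- Key case: both components vanish at `t₀` with finite order. -/
lemma cartanFun_key (γ : ℝ → ℝ × ℝ) (t₀ : ℝ) (a b : ℕ) (ha : 1 ≤ a) (hb : 1 ≤ b)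
    (u v : ℝ → ℝ) (hu : AnalyticAt ℝ u t₀) (hv : AnalyticAt ℝ v t₀)
    (hu0 : u t₀ ≠ 0) (hv0 : v t₀ ≠ 0)
    (h1 : ∀ᶠ t in 𝓝 t₀, (γ t).1 = (t - t₀) ^ a * u t)
    (h2 : ∀ᶠ t in 𝓝 t₀, (γ t).2 = (t - t₀) ^ b * v t) :
    AnalyticAt ℝ (cartanFun ∘ γ) t₀ := by
  set m := min a b with hm
  have hma : m ≤ a := min_le_left a b
  have hmb : m ≤ b := min_le_right a b
  have hm1 : 1 ≤ m := le_min ha hb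
  set w : ℝ → ℝ := fun t => (t - t₀) ^ (2 * (a - m)) * u t ^ 2
      + (t - t₀) ^ (2 * (b - m)) * v t ^ 2 with hw
  have hwA : AnalyticAt ℝ w t₀ := by
    apply AnalyticAt.add
    · exact (((analyticAt_id.sub analyticAt_const).pow _).mul (hu.pow _))
    · exact (((analyticAt_id.sub analyticAt_const).pow _).mul (hv.pow _))
  have hw0 : w t₀ ≠ 0 := by
    intro h0
    have hterm : ∀ (n : ℕ) (c : ℝ), 0 ≤ (0:ℝ) ^ n * c ^ 2 := by intro n c; positivity
    have hwt : w t₀ = (0:ℝ) ^ (2 * (a - m)) * u t₀ ^ 2 + (0:ℝ) ^ (2 * (b - m)) * v t₀ ^ 2 := by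
      simp only [hw, sub_self]
    rw [hwt] at h0
    rcases (by omega : m = a ∨ m = b) with h | h
    · have e : a - m = 0 := by omega
      rw [e] at h0
      have hp : 0 < u t₀ ^ 2 := lt_of_le_of_ne (sq_nonneg _) (Ne.symm (pow_ne_zero 2 hu0))
      simp only [Nat.mul_zero, pow_zero, one_mul] at h0
      nlinarith [hterm (2 * (b - m)) (v t₀)]
    · have e : b - m = 0 := by omega
      rw [e] at h0
      have hp : 0 < v t₀ ^ 2 := lt_of_le_of_ne (sq_nonneg _) (Ne.symm (pow_ne_zero 2 hv0))
      simp only [Nat.mul_zero, pow_zero, one_mul] at h0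
      nlinarith [hterm (2 * (a - m)) (u t₀)]
  have he1 : 1 ≤ 3 * a - 2 * m := by omega
  set φ : ℝ → ℝ := fun t => (t - t₀) ^ (3 * a - 2 * m) * u t ^ 3 / w t with hφ
  have hφA : AnalyticAt ℝ φ t₀ :=
    (((analyticAt_id.sub analyticAt_const).pow _).mul (hu.pow _)).div hwA hw0
  apply hφA.congr
  have hwne : ∀ᶠ t in 𝓝 t₀, w t ≠ 0 := hwA.continuousAt.eventually_ne hw0
  filter_upwards [h1, h2, hwne] with t ht1 ht2 htw
  by_cases hts : t = t₀
  · subst hts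
    have hγ0 : γ t = (0, 0) := by
      have e1 : (γ t).1 = 0 := by rw [ht1, sub_self, zero_pow (by omega), zero_mul]
      have e2 : (γ t).2 = 0 := by rw [ht2, sub_self, zero_pow (by omega), zero_mul]
      exact Prod.ext e1 e2
    simp only [hφ, Function.comp_apply, hγ0, cartanFun_zero, sub_self,
      zero_pow (by omega : 3 * a - 2 * m ≠ 0), zero_mul, zero_div]
  · have hs : t - t₀ ≠ 0 := sub_ne_zero.mpr hts
    have hgeq : (γ t).1 ^ 2 + (γ t).2 ^ 2 = (t - t₀) ^ (2 * m) * w t := by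
      rw [ht1, ht2, hw]
      have e1 : (t - t₀) ^ (2 * m) * ((t - t₀) ^ (2 * (a - m)) * u t ^ 2)
          = (t - t₀) ^ (2 * a) * u t ^ 2 := by
        rw [← mul_assoc, ← pow_add]
        congr 2
        omega
      have e2 : (t - t₀) ^ (2 * m) * ((t - t₀) ^ (2 * (b - m)) * v t ^ 2)
          = (t - t₀) ^ (2 * b) * v t ^ 2 := by
        rw [← mul_assoc, ← pow_add]
        congr 2
        omega
      rw [mul_add, e1, e2, mul_pow, mul_pow, ← pow_mul, ← pow_mul, mul_comm a 2, mul_comm b 2]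
    have hgne : (γ t).1 ^ 2 + (γ t).2 ^ 2 ≠ 0 := by
      rw [hgeq]
      exact mul_ne_zero (pow_ne_zero _ hs) htw
    have hγne : γ t ≠ (0, 0) := by
      intro h
      apply hgne
      rw [h]
      norm_num
    rw [Function.comp_apply, cartanFun_eq_of_ne _ hγne, hgeq, ht1, hφ]
    have e3 : ((t - t₀) ^ a * u t) ^ 3 = (t - t₀) ^ (2 * m) * ((t - t₀) ^ (3 * a - 2 * m) * u t ^ 3) := by
      rw [mul_pow, ← pow_mul, ← mul_assoc, ← pow_add]
      congr 2
      omega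
    rw [e3, mul_div_mul_left _ _ (pow_ne_zero _ hs)]

/-- `cartanFun` is arc-analytic: its composition with every real-analytic
curve `γ : ℝ → ℝ²` is real-analytic. -/
theorem cartanFun_arcAnalytic :
    ∀ γ : ℝ → ℝ × ℝ, AnalyticOn ℝ γ Set.univ →
      AnalyticOn ℝ (cartanFun ∘ γ) Set.univ := by
  intro γ hγ
  rw [analyticOn_univ] at hγ ⊢
  intro t₀ _
  have hγt : AnalyticAt ℝ γ t₀ := hγ t₀ trivial
  have hγ₁ : AnalyticAt ℝ (fun t => (γ t).1) t₀ :=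
    ((ContinuousLinearMap.fst ℝ ℝ ℝ).analyticAt (γ t₀)).comp hγt
  have hγ₂ : AnalyticAt ℝ (fun t => (γ t).2) t₀ :=
    ((ContinuousLinearMap.snd ℝ ℝ ℝ).analyticAt (γ t₀)).comp hγt
  by_cases hz : γ t₀ = (0, 0)
  · -- the curve passes through the origin at t₀
    by_cases h2top : ∀ᶠ t in 𝓝 t₀, (γ t).2 = 0
    · -- second component eventually zero: f ∘ γ = γ₁ near t₀
      apply hγ₁.congr
      filter_upwards [h2top] with t ht
      by_cases hγt0 : γ t = (0, 0)
      · simp [Function.comp_apply, hγt0, cartanFun_zero, cartanFun_zero']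
      · have hx : (γ t).1 ≠ 0 := by
          intro h
          exact hγt0 (Prod.ext h ht)
        rw [Function.comp_apply, cartanFun_eq_of_ne _ hγt0, ht]
        field_simp
        ring
    · by_cases h1top : ∀ᶠ t in 𝓝 t₀, (γ t).1 = 0
      · -- first component eventually zero: f ∘ γ = 0 near t₀
        apply (analyticAt_const (v := (0 : ℝ))).congr
        filter_upwards [h1top] with t ht
        by_cases hγt0 : γ t = (0, 0)
        · simp [Function.comp_apply, hγt0, cartanFun_zero, cartanFun_zero']
        · rw [Function.comp_apply, cartanFun_eq_of_ne _ hγt0, ht]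
          norm_num
      · -- both components have finite positive order
        have ho1 : analyticOrderAt (fun t => (γ t).1) t₀ ≠ ⊤ := fun h => h1top (analyticOrderAt_eq_top.mp h)
        have ho2 : analyticOrderAt (fun t => (γ t).2) t₀ ≠ ⊤ := fun h => h2top (analyticOrderAt_eq_top.mp h)
        obtain ⟨a, ha⟩ := ENat.ne_top_iff_exists.mp ho1
        obtain ⟨b, hb⟩ := ENat.ne_top_iff_exists.mp ho2
        obtain ⟨u, hu, hu0, h1⟩ := (hγ₁.analyticOrderAt_eq_natCast (n := a)).mp ha.symm
        obtain ⟨v, hv, hv0, h2⟩ := (hγ₂.analyticOrderAt_eq_natCast (n := b)).mp hb.symm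
        simp only [smul_eq_mul] at h1 h2
        have ha1 : 1 ≤ a := by
          by_contra h
          have : a = 0 := by omega
          subst this
          have := h1.self_of_nhds
          rw [hz] at this
          simp at this
          exact hu0 this.symm
        have hb1 : 1 ≤ b := by
          by_contra h
          have : b = 0 := by omega
          subst this
          have := h2.self_of_nhds
          rw [hz] at this
          simp at this
          exact hv0 this.symm
        exact cartanFun_key γ t₀ a b ha1 hb1 u v hu hv hu0 hv0 h1 h2
  · -- γ t₀ ≠ (0,0): locally f ∘ γ = γ₁³ / (γ₁² + γ₂²)
    have hden : (γ t₀).1 ^ 2 + (γ t₀).2 ^ 2 ≠ 0 := by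
      intro h
      obtain ⟨h1, h2⟩ := (cartanFun_aux_sq _ _).mp h
      exact hz (Prod.ext h1 h2)
    have hA : AnalyticAt ℝ (fun t => (γ t).1 ^ 3 / ((γ t).1 ^ 2 + (γ t).2 ^ 2)) t₀ :=
      (hγ₁.pow 3).div ((hγ₁.pow 2).add (hγ₂.pow 2)) hden
    apply hA.congr
    have : ∀ᶠ t in 𝓝 t₀, γ t ≠ (0, 0) := hγt.continuousAt.eventually_ne hz
    filter_upwards [this] with t ht
    rw [Function.comp_apply, cartanFun_eq_of_ne _ ht]
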